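/- If X has law F with finite first moment and mean m_X > 0, and c > 0 is a constant, then T(X + c) ≤ (m_X/(m_X + c)) T(X) < T(X) whenever T(X) > 0; in particular adding a positive constant strictly decreases the inequality index. -/

import Mathlib

open MeasureTheory Complex

/-- Fourier transform `f̂(ξ) = ∫ e^{-iξx} dF(x)` of a measure on `ℝ`. -/
noncomputable def ft (μ : Measure ℝ) (ξ : ℝ) : ℂ :=
  ∫ x, Complex.exp (-(Complex.I * ξ * x)) ∂μ

/-- Derivative of the Fourier transform: `f̂'(ξ) = -i ∫ x e^{-iξx} dF(x)`. -/
noncomputable def ft' (μ : Measure ℝ) (ξ : ℝ) : ℂ :=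
  ∫ x, -(Complex.I * x) * Complex.exp (-(Complex.I * ξ * x)) ∂μ

/-- The Fourier-based inequality index `T(F) = (1/2) sup_ξ |f̂(ξ) - f̂'(ξ)/f̂'(0)|`. -/
noncomputable def Tindex (μ : Measure ℝ) : ℝ :=
  (1 / 2) * ⨆ ξ : ℝ, ‖ft μ ξ - ft' μ ξ / ft' μ 0‖

lemma norm_cexp_one (ξ x : ℝ) : ‖Complex.exp (-(Complex.I * ξ * x))‖ = 1 := by
  rw [Complex.norm_exp]
  simp

lemma cexp_cont (ξ : ℝ) : Continuous fun x : ℝ => Complex.exp (-(Complex.I * ξ * x)) := by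
  fun_prop

lemma int_cexp (μ : Measure ℝ) [IsProbabilityMeasure μ] (ξ : ℝ) :
    Integrable (fun x : ℝ => Complex.exp (-(Complex.I * ξ * x))) μ := by
  refine (integrable_const (1 : ℝ)).mono' ((cexp_cont ξ).aestronglyMeasurable) ?_
  filter_upwards with x
  rw [norm_cexp_one]

lemma int_xcexp (μ : Measure ℝ) (hint : Integrable (fun x : ℝ => x) μ) (ξ : ℝ) :
    Integrable (fun x : ℝ => -(Complex.I * x) * Complex.exp (-(Complex.I * ξ * x))) μ := by
  refine hint.abs.mono' ?_ ?_
  · exact (Continuous.mul (by fun_prop) (cexp_cont ξ)).aestronglyMeasurable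
  · filter_upwards with x
    rw [norm_mul, norm_cexp_one, mul_one, norm_neg, norm_mul, Complex.norm_I, one_mul,
      Complex.norm_real]
    simp [Real.norm_eq_abs]

lemma ft_zero (μ : Measure ℝ) [IsProbabilityMeasure μ] : ft μ 0 = 1 := by
  simp [ft]

lemma ft'_zero (μ : Measure ℝ) (hint : Integrable (fun x : ℝ => x) μ) :
    ft' μ 0 = -(Complex.I * (∫ x, x ∂μ : ℝ)) := by
  have : ∀ x : ℝ, -(Complex.I * x) * Complex.exp (-(Complex.I * (0:ℝ) * x)) = -Complex.I * x := by
    intro x; simp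
  rw [ft']
  simp_rw [this]
  have h2 : (∫ a : ℝ, (a:ℂ) ∂μ) = ((∫ x, x ∂μ : ℝ) : ℂ) := integral_ofReal
  rw [integral_const_mul, h2]
  ring

theorem stmt_5 (μ : Measure ℝ) [IsProbabilityMeasure μ]
    (hint : Integrable (fun x : ℝ => x) μ)
    (mX : ℝ) (hmX : mX = ∫ x, x ∂μ) (hmXpos : 0 < mX)
    (c : ℝ) (hc : 0 < c) :
    Tindex (Measure.map (fun x => x + c) μ) ≤ mX / (mX + c) * Tindex μ ∧
      (0 < Tindex μ → Tindex (Measure.map (fun x => x + c) μ) < Tindex μ) := by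
  set ν := Measure.map (fun x => x + c) μ with hν
  haveI : IsProbabilityMeasure ν :=
    Measure.isProbabilityMeasure_map (measurable_id.add_const c).aemeasurable
  have hmeas : Measurable fun x : ℝ => x + c := measurable_id.add_const c
  -- ft of ν
  have hft : ∀ ξ : ℝ, ft ν ξ = Complex.exp (-(Complex.I * ξ * c)) * ft μ ξ := by
    intro ξ
    rw [ft, hν, integral_map hmeas.aemeasurable ((cexp_cont ξ).aestronglyMeasurable)]
    rw [ft, ← integral_const_mul]
    congr 1; ext x
    rw [← Complex.exp_add]
    push_cast
    ring_nf
  -- ft' of ν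
  have hft' : ∀ ξ : ℝ, ft' ν ξ =
      Complex.exp (-(Complex.I * ξ * c)) * (ft' μ ξ + -(Complex.I * c) * ft μ ξ) := by
    intro ξ
    rw [ft', hν, integral_map hmeas.aemeasurable
      ((show Continuous (fun x : ℝ => -(Complex.I * x) * Complex.exp (-(Complex.I * ξ * x))) from
        Continuous.mul (by fun_prop) (cexp_cont ξ)).aestronglyMeasurable)]
    have : ∀ x : ℝ, -(Complex.I * (x + c : ℝ)) * Complex.exp (-(Complex.I * ξ * (x + c : ℝ)))
        = Complex.exp (-(Complex.I * ξ * c)) * (-(Complex.I * x) * Complex.exp (-(Complex.I * ξ * x)))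
          + Complex.exp (-(Complex.I * ξ * c)) * (-(Complex.I * c) * Complex.exp (-(Complex.I * ξ * x))) := by
      intro x
      rw [← mul_add, ← add_mul]
      push_cast
      rw [show (Complex.I * ξ * (x + c)) = (Complex.I * ξ * c) + (Complex.I * ξ * x) by ring,
        neg_add, Complex.exp_add]
      ring
    simp_rw [this]
    rw [integral_add ((int_xcexp μ hint ξ).const_mul _)
      (((int_cexp μ ξ).const_mul _).const_mul _), integral_const_mul, integral_const_mul,
      integral_const_mul, ft', ft]
    ring
  have hintc : Integrable (fun x : ℝ => x) ν := by
    rw [hν]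
    rw [integrable_map_measure (Continuous.aestronglyMeasurable (by fun_prop)) hmeas.aemeasurable]
    exact hint.add (integrable_const c)
  have hmeanν : (∫ x, x ∂ν) = mX + c := by
    rw [hν, integral_map hmeas.aemeasurable (Continuous.aestronglyMeasurable (by fun_prop)),
      integral_add hint (integrable_const c), hmX]
    simp
  -- denominators
  have hft'0 : ft' μ 0 = -(Complex.I * mX) := by rw [ft'_zero μ hint, hmX]
  have hft'0ν : ft' ν 0 = -(Complex.I * (mX + c : ℝ)) := by
    rw [ft'_zero ν hintc, hmeanν]
  have hm0 : (mX : ℂ) ≠ 0 := by exact_mod_cast hmXpos.ne'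
  have hmc0 : ((mX + c : ℝ) : ℂ) ≠ 0 := by exact_mod_cast (by linarith : mX + c ≠ 0)
  set k : ℝ := mX / (mX + c) with hk
  have hk0 : 0 ≤ k := div_nonneg hmXpos.le (by linarith)
  have hk1 : k < 1 := by
    rw [hk, div_lt_one (by linarith)]; linarith
  -- pointwise norm identity
  have hpt : ∀ ξ : ℝ, ‖ft ν ξ - ft' ν ξ / ft' ν 0‖ = k * ‖ft μ ξ - ft' μ ξ / ft' μ 0‖ := by
    intro ξ
    have key : ft ν ξ - ft' ν ξ / ft' ν 0 =
        Complex.exp (-(Complex.I * ξ * c)) * ((k : ℝ) : ℂ) * (ft μ ξ - ft' μ ξ / ft' μ 0) := by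
      have h1 : (mX:ℂ) + c ≠ 0 := by
        have : ((mX + c : ℝ) : ℂ) = (mX:ℂ) + c := by push_cast; ring
        rwa [this] at hmc0
      rw [hft ξ, hft' ξ, hft'0, hft'0ν, hk]
      push_cast
      field_simp [Complex.I_ne_zero, hm0, h1]
      ring
    rw [key, norm_mul, norm_mul, norm_cexp_one, one_mul, Complex.norm_real,
      Real.norm_eq_abs, _root_.abs_of_nonneg hk0]
  have hsup : (⨆ ξ : ℝ, ‖ft ν ξ - ft' ν ξ / ft' ν 0‖) = k * ⨆ ξ : ℝ, ‖ft μ ξ - ft' μ ξ / ft' μ 0‖ := by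
    rw [Real.mul_iSup_of_nonneg hk0]
    exact iSup_congr hpt
  have hT : Tindex ν = k * Tindex μ := by
    rw [Tindex, Tindex, hsup]; ring
  constructor
  · rw [hT]
  · intro hpos
    rw [hT]
    calc k * Tindex μ < 1 * Tindex μ := by
          exact mul_lt_mul_of_pos_right hk1 hpos
      _ = Tindex μ := one_mul _
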